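/- Let Γ be a finite group acting on a lattice X with E = X ⊗ ℝ. An element γx ∈ Γ ⋉ X (γ ∈ Γ, x ∈ X) has an isolated fixed point in E if and only if γ is elliptic in Γ (i.e. E^{ρ(γ)} = 0). Moreover, if γ is elliptic, then the lattice (id_E − ρ(γ))X has finite index in X, and consequently Γ ⋉ X has only finitely many elliptic conjugacy classes. -/

import Mathlib

/- STATEMENT 13: elements γx of Γ⋉X with isolated fixed points in E = X⊗ℝ are
exactly those with γ elliptic; then (1−ρ(γ))X has finite index in X, and Γ⋉X
has finitely many elliptic conjugacy classes. -/

noncomputable section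

variable {d : ℕ} (Γ : Type) [Group Γ] [Fintype Γ]

abbrev XZ (d : ℕ) := Fin d → ℤ
abbrev ER (d : ℕ) := Fin d → ℝ

/-- The inclusion `X → E = X ⊗ ℝ`. -/
def ιR (x : XZ d) : ER d := fun i => (x i : ℝ)

/-- The real extension of an additive automorphism of the lattice `X`. -/
def realExt (f : XZ d ≃+ XZ d) : ER d → ER d := fun v i =>
  ∑ j, ((f (Pi.single j 1)) i : ℝ) * v j

def matR (f : XZ d ≃+ XZ d) : Matrix (Fin d) (Fin d) ℝ := fun i j => ((f (Pi.single j 1)) i : ℝ)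

lemma realExt_eq (f : XZ d ≃+ XZ d) (v : ER d) : realExt f v = (matR f).mulVec v := rfl

lemma realExt_eqM (f : Multiplicative (AddAut (XZ d))) (v : ER d) :
    realExt f v = (matR f).mulVec v := rfl

-- additive hom as integer matrix
lemma hom_apply (g : XZ d →+ XZ d) (x : XZ d) (i : Fin d) :
    g x i = ∑ j, g (Pi.single j 1) i * x j := by
  conv_lhs => rw [pi_eq_sum_univ x, map_sum, Finset.sum_apply]
  refine Finset.sum_congr rfl fun j _ => ?_
  rw [map_zsmul, Pi.smul_apply, smul_eq_mul, mul_comm]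
  have h : (fun j' => if j = j' then 1 else 0 : XZ d) = Pi.single j 1 := by
    ext k; simp [Pi.single_apply, eq_comm]
  rw [h]

/-- integer matrix of `id - ρ γ` -/
def MZa (g : XZ d →+ XZ d) : Matrix (Fin d) (Fin d) ℤ := fun i j => g (Pi.single j 1) i

lemma hom_eq_mulVec (g : XZ d →+ XZ d) (x : XZ d) : g x = (MZa g).mulVec x := by
  ext i
  rw [hom_apply]
  rfl

lemma map_MZa (f : XZ d ≃+ XZ d) :
    (MZa ((AddMonoidHom.id (XZ d)) - f.toAddMonoidHom)).map (Int.cast : ℤ → ℝ)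
      = 1 - matR f := by
  ext i j
  simp only [MZa, matR, Matrix.map_apply, Matrix.sub_apply, Matrix.one_apply,
    AddMonoidHom.sub_apply, AddMonoidHom.id_apply, Pi.sub_apply, AddEquiv.coe_toAddMonoidHom,
    Pi.single_apply]
  push_cast
  by_cases h : i = j <;> simp [h, eq_comm]

lemma Bmat_mulVec (f : XZ d ≃+ XZ d) (v : ER d) :
    (1 - matR f).mulVec v = v - realExt f v := by
  rw [Matrix.sub_mulVec, Matrix.one_mulVec, realExt_eq]

lemma elliptic_iff_det (f : XZ d ≃+ XZ d) :
    (∀ v : ER d, realExt f v = v → v = 0) ↔ (1 - matR f).det ≠ 0 := by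
  rw [Ne, ← Matrix.exists_mulVec_eq_zero_iff]
  push_neg
  constructor
  · rintro h v hv hv0
    rw [Bmat_mulVec] at hv0
    exact hv (h v (sub_eq_zero.mp hv0).symm)
  · intro h v hv
    by_contra hv0
    exact (h v hv0) (by rw [Bmat_mulVec, hv, sub_self])

lemma exists_fix (f : XZ d ≃+ XZ d) (h : (1 - matR f).det ≠ 0) (b : ER d) :
    ∃ e : ER d, b + realExt f e = e := by
  set B := 1 - matR f with hB
  set e := B⁻¹.mulVec b with he
  refine ⟨e, ?_⟩
  have h2 : B.mulVec e = b := by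
    rw [he, Matrix.mulVec_mulVec, Matrix.mul_nonsing_inv _ (isUnit_iff_ne_zero.mpr h),
      Matrix.one_mulVec]
  rw [hB, Bmat_mulVec] at h2
  calc b + realExt f e = (e - realExt f e) + realExt f e := by rw [h2]
    _ = e := by abel

lemma detZ_ne_zero (f : XZ d ≃+ XZ d) (h : ∀ v : ER d, realExt f v = v → v = 0) :
    (MZa ((AddMonoidHom.id (XZ d)) - f.toAddMonoidHom)).det ≠ 0 := by
  have hd := (elliptic_iff_det f).mp h
  intro h0
  apply hd
  rw [← map_MZa f,
    show (MZa ((AddMonoidHom.id (XZ d)) - f.toAddMonoidHom)).map (Int.cast : ℤ → ℝ)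
      = (Int.castRingHom ℝ).mapMatrix (MZa ((AddMonoidHom.id (XZ d)) - f.toAddMonoidHom))
      from rfl, ← RingHom.map_det]
  rw [h0]; simp

lemma finite_quot (f : XZ d ≃+ XZ d) (h : ∀ v : ER d, realExt f v = v → v = 0) :
    Finite (XZ d ⧸ (AddMonoidHom.range ((AddMonoidHom.id (XZ d)) - f.toAddMonoidHom))) := by
  set g := (AddMonoidHom.id (XZ d)) - f.toAddMonoidHom with hg
  set M := MZa g with hM
  have hdet : M.det ≠ 0 := detZ_ne_zero f h
  haveI : AddGroup.FG (XZ d) := Module.Finite.iff_addGroup_fg.mp inferInstance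
  haveI : AddGroup.FG (XZ d ⧸ g.range) :=
    AddGroup.fg_of_surjective (f := QuotientAddGroup.mk' g.range)
      (QuotientAddGroup.mk'_surjective _)
  apply AddCommGroup.finite_of_fg_torsion
  intro y
  obtain ⟨x, rfl⟩ := QuotientAddGroup.mk'_surjective g.range y
  refine isOfFinAddOrder_iff_nsmul_eq_zero.mpr ⟨M.det.natAbs, Int.natAbs_pos.mpr hdet, ?_⟩
  rw [← map_nsmul]
  rw [QuotientAddGroup.mk'_apply, QuotientAddGroup.eq_zero_iff]
  have key : ∀ c : XZ d, g (M.adjugate.mulVec c) = M.det • c := by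
    intro c
    rw [hom_eq_mulVec, ← hM, Matrix.mulVec_mulVec, Matrix.mul_adjugate,
      Matrix.smul_mulVec, Matrix.one_mulVec]
  rw [← natCast_zsmul, Int.natCast_natAbs]
  rcases abs_choice M.det with hc | hc <;> rw [hc]
  · exact ⟨M.adjugate.mulVec x, key x⟩
  · exact ⟨-(M.adjugate.mulVec x), by rw [map_neg, key, neg_smul]⟩

variable (ρ : Γ →* Multiplicative (AddAut (XZ d)))

/-- `γ` is elliptic: `E^{ρ(γ)} = 0`. -/
def IsElliptic (γ : Γ) : Prop := ∀ v : ER d, realExt (ρ γ) v = v → v = 0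

/-- The action of `Γ` on `Multiplicative X` by automorphisms. -/
def phiAct : Γ →* MulAut (Multiplicative (XZ d)) where
  toFun γ := AddEquiv.toMultiplicative (ρ γ)
  map_one' := by ext x; rw [map_one]; rfl
  map_mul' a b := by ext x; rw [map_mul]; rfl

/-- The group `W = Γ ⋉ X` (written with `X` first, as `X ⋊ Γ`). -/
abbrev Wgrp := Multiplicative (XZ d) ⋊[phiAct Γ ρ] Γ

/-- The affine action of `w = γx ∈ Γ ⋉ X` on `E`: `v ↦ x + ρ(γ)v`. -/
def affAct (w : Wgrp Γ ρ) (v : ER d) : ER d :=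
  ιR (Multiplicative.toAdd w.left) + realExt (ρ w.right) v

/-- `w` has an isolated fixed point in `E`. -/
def HasIsolatedFixedPoint (w : Wgrp Γ ρ) : Prop :=
  ∃ e : ER d, affAct Γ ρ w e = e ∧
    ∃ U ∈ nhds e, ∀ y ∈ U, affAct Γ ρ w y = y → y = e

lemma conj_calc (γ : Γ) (x z : XZ d) :
    (⟨Multiplicative.ofAdd z, 1⟩ : Wgrp Γ ρ) * ⟨Multiplicative.ofAdd x, γ⟩ *
      (⟨Multiplicative.ofAdd z, 1⟩ : Wgrp Γ ρ)⁻¹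
      = ⟨Multiplicative.ofAdd (x + (z - (Multiplicative.toAdd (ρ γ)) z)), γ⟩ := by
  ext : 1
  · simp only [SemidirectProduct.mul_left, SemidirectProduct.mul_right,
      SemidirectProduct.inv_left, SemidirectProduct.inv_right,
      map_one, inv_one, MulAut.one_apply, one_mul, mul_one]
    change Multiplicative.ofAdd (z + x + (Multiplicative.toAdd (ρ γ)) (-z)) = _
    rw [map_neg]
    congr 1
    abel
  · simp [SemidirectProduct.mul_right, SemidirectProduct.inv_right]

lemma mk_eq_of_coset (γ : Γ) (x x' : XZ d)
    (h : x' - x ∈ AddMonoidHom.range ((AddMonoidHom.id (XZ d)) - (Multiplicative.toAdd (ρ γ)).toAddMonoidHom)) :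
    ConjClasses.mk (⟨Multiplicative.ofAdd x', γ⟩ : Wgrp Γ ρ)
      = ConjClasses.mk (⟨Multiplicative.ofAdd x, γ⟩ : Wgrp Γ ρ) := by
  obtain ⟨z, hz⟩ := h
  rw [AddMonoidHom.sub_apply, AddMonoidHom.id_apply, AddEquiv.coe_toAddMonoidHom] at hz
  symm
  rw [ConjClasses.mk_eq_mk_iff_isConj, isConj_iff]
  refine ⟨⟨Multiplicative.ofAdd z, 1⟩, ?_⟩
  rw [conj_calc]
  congr 1
  rw [hz]
  congr 1
  abel

set_option maxHeartbeats 1000000 in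
/-- An element `γx ∈ Γ ⋉ X` has an isolated fixed point in
`E` iff `γ` is elliptic; if `γ` is elliptic then the lattice `(id − ρ(γ))X`
has finite index in `X`; consequently `Γ ⋉ X` has only finitely many elliptic
conjugacy classes. -/
theorem isolated_fixed_point_iff_elliptic_and_finiteness :
    (∀ w : Wgrp Γ ρ, HasIsolatedFixedPoint Γ ρ w ↔ IsElliptic Γ ρ w.right) ∧
    (∀ γ : Γ, IsElliptic Γ ρ γ →
      (AddMonoidHom.range
        ((AddMonoidHom.id (XZ d)) - (Multiplicative.toAdd (ρ γ)).toAddMonoidHom)).index ≠ 0) ∧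
    Set.Finite {c : ConjClasses (Wgrp Γ ρ) |
      ∃ w : Wgrp Γ ρ, ConjClasses.mk w = c ∧ HasIsolatedFixedPoint Γ ρ w} := by
  have part1 : ∀ w : Wgrp Γ ρ, HasIsolatedFixedPoint Γ ρ w ↔ IsElliptic Γ ρ w.right := by
    intro w
    constructor
    · rintro ⟨e, he, U, hU, huni⟩ v hv
      by_contra hv0
      have hcont : Continuous fun t : ℝ => e + t • v :=
        continuous_const.add (continuous_id.smul continuous_const)
      have htend : Filter.Tendsto (fun t : ℝ => e + t • v) (nhdsWithin 0 {0}ᶜ) (nhds e) := by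
        have h0 := hcont.tendsto 0
        simp only [zero_smul, add_zero] at h0
        exact h0.mono_left nhdsWithin_le_nhds
      obtain ⟨t, htU, ht0⟩ :=
        ((htend.eventually_mem hU).and (eventually_mem_nhdsWithin)).exists
      have hfix : affAct Γ ρ w (e + t • v) = e + t • v := by
        unfold affAct at he ⊢
        rw [realExt_eqM, Matrix.mulVec_add, Matrix.mulVec_smul, ← realExt_eqM, ← realExt_eqM,
          hv, ← add_assoc, he]
      have := huni _ htU hfix
      have htv : t • v = 0 := by
        have := congrArg (fun u => u - e) this
        simpa using this
      rcases smul_eq_zero.mp htv with h | h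
      · exact ht0 h
      · exact hv0 h
    · intro hell
      have hdet := (elliptic_iff_det (ρ w.right)).mp hell
      obtain ⟨e, he⟩ := exists_fix (ρ w.right) hdet (ιR (Multiplicative.toAdd w.left))
      refine ⟨e, he, Set.univ, Filter.univ_mem, fun y _ hy => ?_⟩
      have hsub : realExt (ρ w.right) (y - e) = y - e := by
        rw [realExt_eqM, Matrix.mulVec_sub, ← realExt_eqM, ← realExt_eqM]
        unfold affAct at hy
        rw [eq_sub_of_add_eq' hy, eq_sub_of_add_eq' he]
        abel
      have := hell _ hsub
      rw [sub_eq_zero] at this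
      exact this
  refine ⟨part1, fun γ hγ => ?_, ?_⟩
  · haveI := finite_quot (Multiplicative.toAdd (ρ γ)) hγ
    exact AddSubgroup.index_ne_zero_of_finite
  · have hsub : {c : ConjClasses (Wgrp Γ ρ) |
        ∃ w : Wgrp Γ ρ, ConjClasses.mk w = c ∧ HasIsolatedFixedPoint Γ ρ w} ⊆
        ⋃ γ : Γ, {c : ConjClasses (Wgrp Γ ρ) |
          IsElliptic Γ ρ γ ∧ ∃ x : XZ d,
            ConjClasses.mk (⟨Multiplicative.ofAdd x, γ⟩ : Wgrp Γ ρ) = c} := by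
      rintro c ⟨w, rfl, hw⟩
      refine Set.mem_iUnion.mpr ⟨w.right, (part1 w).mp hw, Multiplicative.toAdd w.left, ?_⟩
      rfl
    refine Set.Finite.subset (Set.finite_iUnion fun γ => ?_) hsub
    by_cases hγ : IsElliptic Γ ρ γ
    · haveI := finite_quot (Multiplicative.toAdd (ρ γ)) hγ
      set H := AddMonoidHom.range ((AddMonoidHom.id (XZ d)) - (Multiplicative.toAdd (ρ γ)).toAddMonoidHom)
      refine Set.Finite.subset (Set.finite_range
        (fun q : XZ d ⧸ H =>
          ConjClasses.mk (⟨Multiplicative.ofAdd q.out, γ⟩ : Wgrp Γ ρ))) ?_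
      rintro c ⟨-, x, rfl⟩
      refine ⟨QuotientAddGroup.mk x, ?_⟩
      apply mk_eq_of_coset
      have : (QuotientAddGroup.mk (QuotientAddGroup.mk (s := H) x).out : XZ d ⧸ H)
          = QuotientAddGroup.mk x := Quotient.out_eq _
      have h2 := (QuotientAddGroup.eq (s := H)).mp this
      have h3 := H.neg_mem h2
      simpa [H, neg_add_rev, sub_eq_add_neg, add_comm] using h3
    · convert Set.finite_empty
      ext c
      simp only [Set.mem_setOf_eq, Set.mem_empty_iff_false, iff_false]
      rintro ⟨h, -⟩
      exact hγ h

end
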